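/- arXiv:1803.10937 — 4 statements merged into one kernel-verified Lean document; each statement's English description precedes it below -/
import Mathlib

section
/- (Rejection rule correctness.) Let S be a nonempty finite set of arms, and for each arm j ∈ S let μ_j ∈ ℝ be its true mean and LCB_j, UCB_j ∈ ℝ satisfy LCB_j ≤ μ_j ≤ UCB_j. Let k be a positive integer with |S| ≥ k. If an arm i ∈ S satisfies UCB_i < max^{(k)}_{j∈S} LCB_j (the k-th largest value among {LCB_j : j ∈ S}), then at least k arms j ∈ S satisfy μ_j > μ_i; in particular, i is not among the k arms of S with the largest true means. -/
/-- The `k`-th largest value (counted with multiplicity) of the multiset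
`{v j : j ∈ S}`, intended for `1 ≤ k ≤ S.card`. It is the element at position
`S.card - k` of the list of values sorted in increasing order. -/
noncomputable def kthLargest {ι : Type*} (S : Finset ι) (v : ι → ℝ) (k : ℕ) : ℝ :=
  ((S.val.map v).sort (· ≤ ·)).getD (S.card - k) 0

/-- Rejection rule correctness: if each arm's confidence interval traps its true mean
and arm `i ∈ S` satisfies `UCB i < max^{(k)}_{j ∈ S} LCB j` (the `k`-th largest lower
confidence bound among `S`), then at least `k` arms `j ∈ S` have `μ j > μ i`; in
particular `i` is not among the `k` arms of `S` with the largest true means. -/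
theorem rejection_rule_correct {ι : Type*} [DecidableEq ι]
    (S : Finset ι) (hS : S.Nonempty) (μ LCB UCB : ι → ℝ)
    (hbounds : ∀ j ∈ S, LCB j ≤ μ j ∧ μ j ≤ UCB j)
    (k : ℕ) (hk : 1 ≤ k) (hcard : k ≤ S.card)
    (i : ι) (hi : i ∈ S) (hrej : UCB i < kthLargest S LCB k) :
    k ≤ (S.filter (fun j => μ i < μ j)).card := by
  classical
  set t := kthLargest S LCB k with ht
  have hsub : S.filter (fun j => t ≤ LCB j) ⊆ S.filter (fun j => μ i < μ j) := by
    intro j hj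
    simp only [Finset.mem_filter] at hj ⊢
    have h1 := (hbounds i hi).2
    have h2 := (hbounds j hj.1).1
    exact ⟨hj.1, by linarith [hj.2]⟩
  refine le_trans ?_ (Finset.card_le_card hsub)
  set l : List ℝ := (S.val.map LCB).sort (· ≤ ·) with hl
  have hlen : l.length = S.card := by
    rw [hl, Multiset.length_sort, Multiset.card_map]; rfl
  have hnk : S.card - k < l.length := by
    rw [hlen]; omega
  have hsorted : l.Pairwise (· ≤ ·) := Multiset.pairwise_sort _ _
  have htget : t = l[S.card - k] := by
    rw [ht, kthLargest, ← hl, List.getD_eq_getElem _ _ hnk]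
  -- count of elements ≥ t in l is at least k
  have hcount : k ≤ l.countP (fun x => decide (t ≤ x)) := by
    have hdrop : l.drop (S.card - k) = l[S.card - k] :: l.drop (S.card - k + 1) :=
      List.drop_eq_getElem_cons hnk
    have hsd : (l.drop (S.card - k)).Pairwise (· ≤ ·) := hsorted.drop
    have hall : ∀ x ∈ l.drop (S.card - k), t ≤ x := by
      intro x hx
      rw [hdrop] at hx hsd
      rcases List.mem_cons.mp hx with h | h
      · rw [htget, h]
      · exact htget ▸ List.rel_of_pairwise_cons hsd h
    calc k = (l.drop (S.card - k)).length := by rw [List.length_drop, hlen]; omega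
      _ = (l.drop (S.card - k)).countP (fun x => decide (t ≤ x)) := by
          symm; rw [List.countP_eq_length]
          intro x hx; simpa using hall x hx
      _ ≤ (l.take (S.card - k)).countP (fun x => decide (t ≤ x)) +
            (l.drop (S.card - k)).countP (fun x => decide (t ≤ x)) := by omega
      _ = l.countP (fun x => decide (t ≤ x)) := by
          rw [← List.countP_append, List.take_append_drop]
  -- relate countP to filter card
  have hcard2 : (S.filter (fun j => t ≤ LCB j)).card
      = l.countP (fun x => decide (t ≤ x)) := by
    have h1 : (l : Multiset ℝ) = S.val.map LCB := Multiset.sort_eq _ _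
    have h2 : l.countP (fun x => decide (t ≤ x))
        = Multiset.countP (fun x => decide (t ≤ x)) (S.val.map LCB) := by
      rw [← h1, Multiset.coe_countP]
      simp
    rw [h2, Multiset.countP_map]
    rw [Finset.card_def, Finset.filter_val]
    simp
  omega
end

section
/- (Acceptance rule correctness.) Let S be a finite set of arms with |S| ≥ k + 1 for a positive integer k, and for each arm j ∈ S let μ_j ∈ ℝ be its true mean and LCB_j, UCB_j ∈ ℝ satisfy LCB_j ≤ μ_j ≤ UCB_j. If an arm i ∈ S satisfies LCB_i > max^{(k+1)}_{j∈S} UCB_j (the (k+1)-th largest value among {UCB_j : j ∈ S}), then at most k − 1 arms j ∈ S satisfy μ_j > μ_i; in particular, i is among the k arms of S with the largest true means. -/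
theorem kth_count {ι : Type*} [DecidableEq ι] (S : Finset ι) (v : ι → ℝ) (k : ℕ)
    (hcard : k + 1 ≤ S.card) :
    (S.filter (fun j => kthLargest S v (k + 1) < v j)).card ≤ k := by
  set L := (S.val.map v).sort (· ≤ ·) with hL
  have hlen : L.length = S.card := by
    simp [hL, Multiset.length_sort]
  have hsorted : L.Pairwise (· ≤ ·) := Multiset.pairwise_sort _ _
  set m := S.card - (k + 1) with hm
  have hmlt : m < L.length := by omega
  have ht : kthLargest S v (k + 1) = L[m] := by
    simp [kthLargest, ← hL, ← hm, List.getD_eq_getElem, hmlt]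
  set t := kthLargest S v (k + 1) with htdef
  have h1 : (S.filter (fun j => t < v j)).card
      = L.countP (fun x => decide (t < x)) := by
    have e1 : (S.filter (fun j => t < v j)).card
        = Multiset.card (S.val.filter (fun j => t < v j)) := by
      rw [← Finset.filter_val]; rfl
    rw [e1, ← Multiset.countP_map]
    have hcoe : (L : Multiset ℝ) = S.val.map v := Multiset.sort_eq _ _
    rw [← hcoe, Multiset.coe_countP]
  rw [h1]
  -- all elements of take (m+1) are ≤ t
  have htake : ∀ x ∈ L.take (m + 1), x ≤ t := by
    intro x hx
    rw [List.mem_take_iff_getElem] at hx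
    obtain ⟨j, hj, hxj⟩ := hx
    have hjm : j ≤ m := by omega
    rw [ht, ← hxj]
    rcases lt_or_eq_of_le hjm with h | h
    · exact (List.pairwise_iff_getElem.mp hsorted) j m _ _ h
    · subst h; rfl
  have hsplit : L = L.take (m + 1) ++ L.drop (m + 1) := (List.take_append_drop _ _).symm
  calc L.countP (fun x => decide (t < x))
      = (L.take (m + 1)).countP (fun x => decide (t < x))
        + (L.drop (m + 1)).countP (fun x => decide (t < x)) := by
        conv_lhs => rw [hsplit]
        exact List.countP_append
    _ ≤ 0 + (L.drop (m + 1)).length := by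
        gcongr
        · have : (L.take (m + 1)).countP (fun x => decide (t < x)) = 0 := by
            rw [List.countP_eq_zero]
            intro x hx
            simpa using not_lt.mpr (htake x hx)
          omega
        · exact List.countP_le_length
    _ ≤ k := by
        rw [List.length_drop, hlen]
        omega


/-- Acceptance rule correctness: if each arm's confidence interval traps its true mean
and arm `i ∈ S` satisfies `LCB i > max^{(k+1)}_{j ∈ S} UCB j` (the `(k+1)`-th largest
upper confidence bound among `S`), then at most `k - 1` arms `j ∈ S` have `μ j > μ i`;
in particular `i` is among the `k` arms of `S` with the largest true means. -/
theorem acceptance_rule_correct {ι : Type*} [DecidableEq ι]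
    (S : Finset ι) (μ LCB UCB : ι → ℝ)
    (hbounds : ∀ j ∈ S, LCB j ≤ μ j ∧ μ j ≤ UCB j)
    (k : ℕ) (hk : 1 ≤ k) (hcard : k + 1 ≤ S.card)
    (i : ι) (hi : i ∈ S) (hacc : kthLargest S UCB (k + 1) < LCB i) :
    (S.filter (fun j => μ i < μ j)).card ≤ k - 1 := by
  have hkey := kth_count S UCB k hcard
  set t := kthLargest S UCB (k + 1) with htdef
  set A := S.filter (fun j => μ i < μ j) with hA
  have hiA : i ∉ A := by simp [hA]
  have hsub : insert i A ⊆ S.filter (fun j => t < UCB j) := by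
    intro j hj
    rcases Finset.mem_insert.mp hj with rfl | h
    ·
      refine Finset.mem_filter.mpr ⟨hi, ?_⟩
      have := hbounds _ hi
      linarith [this.1, this.2]
    · rw [hA, Finset.mem_filter] at h
      refine Finset.mem_filter.mpr ⟨h.1, ?_⟩
      have h1 := hbounds i hi
      have h2 := hbounds j h.1
      linarith [h.2]
  have := Finset.card_le_card hsub
  rw [Finset.card_insert_of_notMem hiA] at this
  omega
end

section
/- (Invariant preservation for one racing update step.) Let n arms have distinct true means μ_1 > μ_2 > ... > μ_n and let 1 ≤ k ≤ n. Let A, R, S be pairwise disjoint subsets of {1, ..., n} with A ∪ R ∪ S = {1, ..., n}, A ⊆ {1, ..., k}, and {1, ..., k} \ A ⊆ S, and set k_t = k − |A|. Suppose for every j ∈ S we are given LCB_j ≤ μ_j ≤ UCB_j. Define the updated sets A' = A ∪ {i ∈ S : LCB_i > max^{(k_t+1)}_{j∈S} UCB_j} and R' = R ∪ {i ∈ S : UCB_i < max^{(k_t)}_{j∈S} LCB_j}, where max^{(m)}_{j∈S} of a family of values is taken to be −∞ whenever |S| < m, and S' = S \ (A' ∪ R'). Then A' ⊆ {1, ...,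 k}, R' ∩ {1, ..., k} = ∅, and {1, ..., k} \ A' ⊆ S'. -/
open scoped Classical

/-- The `m`-th largest value (counted with multiplicity) of the multiset
`{v j : j ∈ S}`, as an extended real number; it is taken to be `⊥ = -∞`
whenever `S.card < m`. -/
noncomputable def kthLargestE {ι : Type*} (S : Finset ι) (v : ι → ℝ) (m : ℕ) : EReal :=
  if m ≤ S.card then ((((S.val.map v).sort (· ≤ ·)).getD (S.card - m) 0 : ℝ) : EReal)
  else ⊥


lemma card_filter_eq_countP {ι : Type*} (S : Finset ι) (v : ι → ℝ) (p : ℝ → Prop) :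
    (S.filter (fun j => p (v j))).card
      = ((S.val.map v).sort (· ≤ ·)).countP (fun a => decide (p a)) := by
  have h1 : (S.filter (fun j => p (v j))).card = Multiset.countP p (S.val.map v) := by
    rw [Multiset.countP_map]
    rfl
  have h2 : (↑(((S.val.map v)).sort (· ≤ ·)) : Multiset ℝ) = S.val.map v :=
    Multiset.sort_eq _ _
  rw [h1, ← Multiset.coe_countP, h2]

lemma le_kthLargestE {ι : Type*} (S : Finset ι) (v : ι → ℝ) (m : ℕ) (c : ℝ)
    (hm : 1 ≤ m) (h : m ≤ (S.filter (fun j => c ≤ v j)).card) :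
    ((c : ℝ) : EReal) ≤ kthLargestE S v m := by
  have hmS : m ≤ S.card := le_trans h (Finset.card_filter_le _ _)
  set l := (S.val.map v).sort (· ≤ ·) with hl
  have hsort : l.Pairwise (· ≤ ·) := Multiset.pairwise_sort _ _
  have hlen : l.length = S.card := by
    rw [hl, Multiset.length_sort, Multiset.card_map]; rfl
  have hidx : S.card - m < l.length := by omega
  have hcount : m ≤ l.countP (fun a => decide (c ≤ a)) := by
    have hcc := card_filter_eq_countP S v (fun a => c ≤ a)
    rw [← hl] at hcc
    exact hcc ▸ h
  rw [kthLargestE, if_pos hmS, List.getD_eq_getElem _ _ hidx]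
  rw [EReal.coe_le_coe_iff]
  by_contra hx
  push_neg at hx
  have hsplit := List.take_append_drop (S.card - m + 1) l
  have hc : l.countP (fun a => decide (c ≤ a))
      = (l.take (S.card - m + 1)).countP (fun a => decide (c ≤ a))
        + (l.drop (S.card - m + 1)).countP (fun a => decide (c ≤ a)) := by
    rw [← List.countP_append, hsplit]
  have htake : (l.take (S.card - m + 1)).countP (fun a => decide (c ≤ a)) = 0 := by
    rw [List.countP_eq_zero]
    intro a ha
    obtain ⟨i, hi, rfl⟩ := List.mem_take_iff_getElem.mp ha
    have hile : i ≤ S.card - m := by omega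
    have hle : l[i]'(by omega) ≤ l[S.card - m] := by
      have := hsort.rel_get_of_le (a := ⟨i, by omega⟩) (b := ⟨S.card - m, hidx⟩) hile
      simpa using this
    simp only [decide_eq_true_eq]
    push_neg
    exact lt_of_le_of_lt hle hx
  have hdrop : (l.drop (S.card - m + 1)).countP (fun a => decide (c ≤ a))
      ≤ m - 1 := by
    calc _ ≤ (l.drop (S.card - m + 1)).length := List.countP_le_length
    _ = m - 1 := by rw [List.length_drop]; omega
  omega

lemma kthLargestE_mem {ι : Type*} (S : Finset ι) (v : ι → ℝ) (m : ℕ)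
    (hm : 1 ≤ m) (hmS : m ≤ S.card) :
    ∃ x : ℝ, kthLargestE S v m = (x : EReal)
      ∧ m ≤ (S.filter (fun j => x ≤ v j)).card := by
  set l := (S.val.map v).sort (· ≤ ·) with hl
  have hsort : l.Pairwise (· ≤ ·) := Multiset.pairwise_sort _ _
  have hlen : l.length = S.card := by
    rw [hl, Multiset.length_sort, Multiset.card_map]; rfl
  have hidx : S.card - m < l.length := by omega
  refine ⟨l[S.card - m], ?_, ?_⟩
  · rw [kthLargestE, if_pos hmS, List.getD_eq_getElem _ _ hidx]
  · rw [card_filter_eq_countP, ← hl]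
    have hsplit := List.take_append_drop (S.card - m) l
    have hc : l.countP (fun a => decide (l[S.card - m] ≤ a))
        = (l.take (S.card - m)).countP (fun a => decide (l[S.card - m] ≤ a))
          + (l.drop (S.card - m)).countP (fun a => decide (l[S.card - m] ≤ a)) := by
      rw [← List.countP_append, hsplit]
    have hdrop : (l.drop (S.card - m)).countP (fun a => decide (l[S.card - m] ≤ a))
        = (l.drop (S.card - m)).length := by
      rw [List.countP_eq_length]
      intro a ha
      obtain ⟨i, hi, hget⟩ := List.mem_iff_getElem.mp ha
      have hi' : S.card - m + i < l.length := by
        rw [List.length_drop] at hi; omega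
      have h1 : (l.drop (S.card - m))[i] = l[S.card - m + i]'hi' :=
        List.getElem_drop
      have h2 : l[S.card - m] ≤ l[S.card - m + i]'hi' := by
        have := hsort.rel_get_of_le (a := ⟨S.card - m, hidx⟩)
          (b := ⟨S.card - m + i, hi'⟩) (by simp)
        simpa using this
      rw [← hget, h1]
      simpa using h2
    have hlen' : (l.drop (S.card - m)).length = m := by
      rw [List.length_drop]; omega
    omega

/-- Invariant preservation for one racing update step: with true means
`μ 0 > μ 1 > ⋯ > μ (n-1)`, top-`k` set `{i : i < k}`, disjoint sets `A ∪ R ∪ S = [n]`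
with `A ⊆ top-k` and `top-k \ A ⊆ S`, valid confidence bounds on `S`, and the racing
update with `k_t = k - |A|` (accept arms whose LCB beats the `(k_t+1)`-th largest UCB,
reject arms whose UCB is below the `k_t`-th largest LCB), the updated sets satisfy
`A' ⊆ top-k`, `R' ∩ top-k = ∅`, and `top-k \ A' ⊆ S'`. -/
theorem racing_update_invariant (n k : ℕ) (hk1 : 1 ≤ k) (hkn : k ≤ n)
    (μ : Fin n → ℝ) (hmono : ∀ i j : Fin n, i < j → μ j < μ i)
    (A R S : Finset (Fin n))
    (hAR : Disjoint A R) (hAS : Disjoint A S) (hRS : Disjoint R S)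
    (hunion : A ∪ R ∪ S = Finset.univ)
    (hA : A ⊆ Finset.univ.filter (fun i : Fin n => (i : ℕ) < k))
    (hrem : Finset.univ.filter (fun i : Fin n => (i : ℕ) < k) \ A ⊆ S)
    (LCB UCB : Fin n → ℝ)
    (hbounds : ∀ j ∈ S, LCB j ≤ μ j ∧ μ j ≤ UCB j)
    (A' R' S' : Finset (Fin n))
    (hA' : A' = A ∪ S.filter
      (fun i => kthLargestE S UCB (k - A.card + 1) < ((LCB i : ℝ) : EReal)))
    (hR' : R' = R ∪ S.filter
      (fun i => ((UCB i : ℝ) : EReal) < kthLargestE S LCB (k - A.card)))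
    (hS' : S' = S \ (A' ∪ R')) :
    A' ⊆ Finset.univ.filter (fun i : Fin n => (i : ℕ) < k) ∧
    R' ∩ Finset.univ.filter (fun i : Fin n => (i : ℕ) < k) = ∅ ∧
    Finset.univ.filter (fun i : Fin n => (i : ℕ) < k) \ A' ⊆ S' := by
  set T := Finset.univ.filter (fun i : Fin n => (i : ℕ) < k) with hT
  have hmemT : ∀ i : Fin n, i ∈ T ↔ (i : ℕ) < k := by
    intro i; simp [hT]
  have hTcard : T.card = k := by
    have heq : T = (Finset.univ : Finset (Fin k)).map
        ⟨Fin.castLE hkn, Fin.castLE_injective hkn⟩ := by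
      ext i
      simp only [Finset.mem_map, Function.Embedding.coeFn_mk, Finset.mem_univ,
        true_and, hmemT]
      constructor
      · intro h; exact ⟨⟨(i : ℕ), h⟩, rfl⟩
      · rintro ⟨j, -, rfl⟩; exact j.isLt
    rw [heq, Finset.card_map, Finset.card_univ, Fintype.card_fin]
  have hTA : T \ A ⊆ S := hrem
  have hTAcard : (T \ A).card = k - A.card := by
    rw [Finset.card_sdiff_of_subset hA, hTcard]
  -- Claim 1
  have claim1 : ∀ i ∈ S,
      kthLargestE S UCB (k - A.card + 1) < ((LCB i : ℝ) : EReal) → (i : ℕ) < k := by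
    intro i hiS hlt
    by_contra hik
    push_neg at hik
    have hiT : i ∉ T \ A := fun h => by
      have := (hmemT i).mp (Finset.mem_sdiff.mp h).1; omega
    set G := insert i (T \ A) with hG
    have hGcard : G.card = k - A.card + 1 := by
      rw [hG, Finset.card_insert_of_notMem hiT, hTAcard]
    have hGsub : G ⊆ S.filter (fun j => LCB i ≤ UCB j) := by
      intro j hj
      rw [hG, Finset.mem_insert] at hj
      rcases hj with rfl | hj
      · exact Finset.mem_filter.mpr ⟨hiS, le_trans (hbounds j hiS).1 (hbounds j hiS).2⟩
      · have hjS : j ∈ S := hTA hj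
        have hjk : (j : ℕ) < k := (hmemT j).mp (Finset.mem_sdiff.mp hj).1
        have hji : j < i := by
          rw [Fin.lt_def]; omega
        have : μ i < μ j := hmono j i hji
        exact Finset.mem_filter.mpr ⟨hjS,
          le_trans (hbounds i hiS).1 (le_trans this.le (hbounds j hjS).2)⟩
    have hle : ((LCB i : ℝ) : EReal) ≤ kthLargestE S UCB (k - A.card + 1) :=
      le_kthLargestE S UCB (k - A.card + 1) (LCB i) (by omega)
        (by rw [← hGcard]; exact Finset.card_le_card hGsub)
    exact absurd hlt (not_lt.mpr hle)
  -- Claim 2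
  have claim2 : ∀ i ∈ S, (i : ℕ) < k →
      ¬ (((UCB i : ℝ) : EReal) < kthLargestE S LCB (k - A.card)) := by
    intro i hiS hik hlt
    have hiTA : i ∈ T \ A := Finset.mem_sdiff.mpr ⟨(hmemT i).mpr hik,
      fun h => (Finset.disjoint_left.mp hAS) h hiS⟩
    have hkt1 : 1 ≤ k - A.card := by
      have := Finset.card_pos.mpr ⟨i, hiTA⟩; omega
    have hktS : k - A.card ≤ S.card := by
      rw [← hTAcard]; exact Finset.card_le_card hTA
    obtain ⟨x, hx, hcard⟩ := kthLargestE_mem S LCB (k - A.card) hkt1 hktS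
    rw [hx, EReal.coe_lt_coe_iff] at hlt
    have hFsub : S.filter (fun j => x ≤ LCB j) ⊆ (T \ A).erase i := by
      intro j hj
      obtain ⟨hjS, hjx⟩ := Finset.mem_filter.mp hj
      have hμ : μ i < μ j :=
        lt_of_le_of_lt (hbounds i hiS).2 (lt_of_lt_of_le (lt_of_lt_of_le hlt hjx)
          (hbounds j hjS).1)
      have hji : j < i := by
        by_contra hc
        push_neg at hc
        rcases eq_or_lt_of_le hc with rfl | hc'
        · exact lt_irrefl _ hμ
        · exact absurd (hmono i j hc') (not_lt.mpr hμ.le)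
      have hjk : (j : ℕ) < k := by
        have := Fin.lt_def.mp hji; omega
      refine Finset.mem_erase.mpr ⟨Fin.ne_of_lt hji, Finset.mem_sdiff.mpr
        ⟨(hmemT j).mpr hjk, fun h => (Finset.disjoint_left.mp hAS) h hjS⟩⟩
    have hFcard : (S.filter (fun j => x ≤ LCB j)).card ≤ k - A.card - 1 := by
      calc _ ≤ ((T \ A).erase i).card := Finset.card_le_card hFsub
      _ = k - A.card - 1 := by rw [Finset.card_erase_of_mem hiTA, hTAcard]
    omega
  -- not-in-R for top-k elements
  have hRT : ∀ i ∈ T, i ∉ R := by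
    intro i hiT hiR
    by_cases hiA : i ∈ A
    · exact (Finset.disjoint_left.mp hAR) hiA hiR
    · exact (Finset.disjoint_left.mp hRS) hiR (hTA (Finset.mem_sdiff.mpr ⟨hiT, hiA⟩))
  refine ⟨?_, ?_, ?_⟩
  · -- A' ⊆ T
    rw [hA']
    refine Finset.union_subset hA ?_
    intro i hi
    obtain ⟨hiS, hlt⟩ := Finset.mem_filter.mp hi
    exact (hmemT i).mpr (claim1 i hiS hlt)
  · -- R' ∩ T = ∅
    rw [hR']
    ext i
    simp only [Finset.mem_inter, Finset.mem_union, Finset.mem_filter,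
      Finset.notMem_empty, iff_false, not_and]
    rintro (hiR | hiF) hiT
    · exact hRT i hiT hiR
    · exact claim2 i hiF.1 ((hmemT i).mp hiT) hiF.2
  · -- T \ A' ⊆ S'
    intro i hi
    obtain ⟨hiT, hiA'⟩ := Finset.mem_sdiff.mp hi
    have hiA : i ∉ A := fun h => hiA' (hA' ▸ Finset.mem_union_left _ h)
    have hiS : i ∈ S := hTA (Finset.mem_sdiff.mpr ⟨hiT, hiA⟩)
    have hiR' : i ∉ R' := by
      rw [hR']
      intro h
      rcases Finset.mem_union.mp h with hiR | hiF
      · exact hRT i hiT hiR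
      · obtain ⟨_, hlt⟩ := Finset.mem_filter.mp hiF
        exact claim2 i hiS ((hmemT i).mp hiT) hlt
    rw [hS']
    exact Finset.mem_sdiff.mpr ⟨hiS, fun h => by
      rcases Finset.mem_union.mp h with h | h
      · exact hiA' h
      · exact hiR' h⟩
end

section
/- (Deterministic core of Theorem 1: correctness of the racing procedure.) Let n arms have distinct true means μ_1 > μ_2 > ... > μ_n and let 1 ≤ k ≤ n. Consider a finite sequence of configurations (A_t, R_t, S_t) for t = 0, 1, ..., T of pairwise disjoint subsets of {1, ..., n} with A_t ∪ R_t ∪ S_t = {1, ..., n}, such that: (i) A_0 = R_0 = ∅ and S_0 = {1, ..., n}; (ii) for each t < T there exist bounds LCB_{j,t} ≤ μ_j ≤ UCB_{j,t} for all j ∈ S_t such that, with k_t = k − |A_t|, A_{t+1} = A_t ∪ {i ∈ S_t : LCB_{i,t} > max^{(k_t+1)}_{j∈S_t} UCB_{j,t}}, R_{t+1} = R_t ∪ {i ∈ S_t : UCB_{i,t} < max^{(k_t)}_{j∈S_t} LCB_{j,t}}, and S_{t+1} = S_t \ (A_{t+1} ∪ R_{t+1}), where max^{(m)}_{j∈S}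 is taken to be −∞ whenever |S| < m; and (iii) S_T = ∅. Then A_T = {1, ..., k}, i.e., the procedure outputs exactly the top-k arms. -/
open scoped Classical

lemma sorted_getD_ge (l : List ℝ) (hs : l.Pairwise (· ≤ ·)) (m : ℕ) (hm1 : 1 ≤ m)
    (hml : m ≤ l.length) (c : ℝ)
    (hcount : m ≤ l.countP (fun x => decide (c ≤ x))) :
    c ≤ l.getD (l.length - m) 0 := by
  by_contra h
  push_neg at h
  set i0 := l.length - m with hi0
  have hi0lt : i0 < l.length := by omega
  have hget : l.getD i0 0 = l[i0] := List.getD_eq_getElem l 0 hi0lt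
  rw [hget] at h
  have hsplit : l = l.take i0 ++ l.drop i0 := (List.take_append_drop i0 l).symm
  have hc : l.countP (fun x => decide (c ≤ x)) =
      (l.take i0).countP (fun x => decide (c ≤ x)) + (l.drop i0).countP (fun x => decide (c ≤ x)) := by
    conv_lhs => rw [hsplit]
    exact List.countP_append
  have htake : (l.take i0).countP (fun x => decide (c ≤ x)) = 0 := by
    rw [List.countP_eq_zero]
    intro a ha
    simp only [decide_eq_true_eq]
    obtain ⟨j, hj, hja⟩ := List.getElem_of_mem ha
    have hjlen : j < i0 := by simp [List.length_take] at hj; omega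
    have : a = l[j] := by rw [← hja, List.getElem_take]
    have hle : l[j] ≤ l[i0] := hs.rel_get_of_lt (a := ⟨j, by omega⟩) (b := ⟨i0, hi0lt⟩) (by exact hjlen)
    intro hca
    exact absurd (hca.trans (this ▸ hle)) (not_le.mpr h)
  have hdrop : (l.drop i0).countP (fun x => decide (c ≤ x)) ≤ m - 1 := by
    rw [List.drop_eq_getElem_cons hi0lt, List.countP_cons]
    have hfalse : (decide (c ≤ l[i0]) : Bool) = false := by simp [not_le.mpr h]
    rw [hfalse]
    have hlen := (l.drop (i0+1)).countP_le_length (p := fun x => decide (c ≤ x))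
    simp only [List.length_drop] at hlen
    simp only [Bool.false_eq_true, if_false, add_zero]
    omega
  omega

lemma sorted_countP_gt (l : List ℝ) (hs : l.Pairwise (· ≤ ·)) (m : ℕ) (hm1 : 1 ≤ m)
    (hml : m ≤ l.length) (c : ℝ)
    (h : c < l.getD (l.length - m) 0) :
    m ≤ l.countP (fun x => decide (c < x)) := by
  set i0 := l.length - m with hi0
  have hi0lt : i0 < l.length := by omega
  rw [List.getD_eq_getElem l 0 hi0lt] at h
  have hsplit : l = l.take i0 ++ l.drop i0 := (List.take_append_drop i0 l).symm
  have hc : l.countP (fun x => decide (c < x)) =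
      (l.take i0).countP (fun x => decide (c < x)) + (l.drop i0).countP (fun x => decide (c < x)) := by
    conv_lhs => rw [hsplit]
    exact List.countP_append
  have hdrop : (l.drop i0).countP (fun x => decide (c < x)) = (l.drop i0).length := by
    rw [List.countP_eq_length]
    intro a ha
    simp only [decide_eq_true_eq]
    obtain ⟨j, hj, hja⟩ := List.getElem_of_mem ha
    rw [List.getElem_drop] at hja
    have hjlen : i0 + j < l.length := by simp [List.length_drop] at hj; omega
    have hle : l[i0] ≤ l[i0 + j] := by
      rcases Nat.eq_zero_or_pos j with h0 | h0
      · subst h0; simp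
      · have := hs.rel_get_of_lt (a := ⟨i0, hi0lt⟩) (b := ⟨i0 + j, hjlen⟩) (by simp; omega)
        simpa using this
    exact h.trans_le (hja ▸ hle)
  rw [hc, hdrop]
  simp only [List.length_drop]
  omega

lemma le_kthLargestE_s14 {ι : Type*} (S W : Finset ι) (v : ι → ℝ) (c : ℝ)
    (hWS : W ⊆ S) (hW1 : W.Nonempty) (hvc : ∀ j ∈ W, c ≤ v j) :
    ((c : ℝ) : EReal) ≤ kthLargestE S v W.card := by
  have hmS : W.card ≤ S.card := Finset.card_le_card hWS
  rw [kthLargestE, if_pos hmS]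
  rw [EReal.coe_le_coe_iff]
  set l := ((S.val.map v).sort (· ≤ ·)) with hl
  have hlen : l.length = S.card := by
    rw [hl, Multiset.length_sort, Multiset.card_map]; rfl
  have hcount : W.card ≤ l.countP (fun x => decide (c ≤ x)) := by
    have h1 : (l.countP (fun x => decide (c ≤ x)) : ℕ) = Multiset.countP (fun x => c ≤ x) (S.val.map v) := by
      rw [← Multiset.coe_countP, hl, Multiset.sort_eq]
    rw [h1]
    have h2 : Multiset.countP (fun x => c ≤ x) (W.val.map v) ≤
        Multiset.countP (fun x => c ≤ x) (S.val.map v) :=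
      Multiset.countP_le_of_le _ (Multiset.map_le_map (Finset.val_le_iff.mpr hWS))
    have h3 : Multiset.countP (fun x => c ≤ x) (W.val.map v) = W.card := by
      rw [Multiset.countP_eq_card.mpr, Multiset.card_map]; rfl
      intro a ha
      obtain ⟨j, hj, rfl⟩ := Multiset.mem_map.mp ha
      exact hvc j hj
    omega
  have := sorted_getD_ge l (Multiset.pairwise_sort _ _) W.card (Finset.card_pos.mpr hW1) (by omega) c hcount
  rwa [hlen] at this

lemma kthLargestE_lt_count {ι : Type*} (S : Finset ι) (v : ι → ℝ) (m : ℕ) (hm1 : 1 ≤ m)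
    (c : ℝ) (h : ((c : ℝ) : EReal) < kthLargestE S v m) :
    m ≤ (S.filter (fun j => c < v j)).card := by
  rw [kthLargestE] at h
  by_cases hmS : m ≤ S.card
  · rw [if_pos hmS, EReal.coe_lt_coe_iff] at h
    set l := ((S.val.map v).sort (· ≤ ·)) with hl
    have hlen : l.length = S.card := by
      rw [hl, Multiset.length_sort, Multiset.card_map]; rfl
    have := sorted_countP_gt l (Multiset.pairwise_sort _ _) m hm1 (by omega) c (by rwa [hlen])
    have h1 : (l.countP (fun x => decide (c < x)) : ℕ) = Multiset.countP (fun x => c < x) (S.val.map v) := by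
      rw [← Multiset.coe_countP, hl, Multiset.sort_eq]
    rw [h1] at this
    rw [Multiset.countP_map] at this
    have h2 : (S.filter (fun j => c < v j)).card = Multiset.card (Multiset.filter (fun a => c < v a) S.val) := by
      rw [Finset.card, Finset.filter_val]
    omega
  · rw [if_neg hmS] at h
    exact absurd h (by simp)

/-- Deterministic core of Theorem 1 (correctness of the racing procedure): with true
means `μ 0 > μ 1 > ⋯ > μ (n-1)` and `1 ≤ k ≤ n`, consider configurations
`(A t, R t, S t)` for `t = 0, …, T` of pairwise disjoint sets partitioning the arms,
starting from `A 0 = R 0 = ∅`, `S 0 = univ`, where each step is a racing update (with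
`k_t = k - |A t|`: accept surviving arms whose LCB beats the `(k_t+1)`-th largest UCB,
reject surviving arms whose UCB is below the `k_t`-th largest LCB, for some confidence
bounds trapping the true means of surviving arms). If `S T = ∅`, then
`A T = {i : i < k}`, i.e. the procedure outputs exactly the top-`k` arms. -/
theorem racing_procedure_correct (n k T : ℕ) (hk1 : 1 ≤ k) (hkn : k ≤ n)
    (μ : Fin n → ℝ) (hmono : ∀ i j : Fin n, i < j → μ j < μ i)
    (A R S : ℕ → Finset (Fin n))
    (hdisj : ∀ t ≤ T,
      Disjoint (A t) (R t) ∧ Disjoint (A t) (S t) ∧ Disjoint (R t) (S t))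
    (hunion : ∀ t ≤ T, A t ∪ R t ∪ S t = Finset.univ)
    (hinitA : A 0 = ∅) (hinitR : R 0 = ∅) (hinitS : S 0 = Finset.univ)
    (hstep : ∀ t < T, ∃ LCB UCB : Fin n → ℝ,
      (∀ j ∈ S t, LCB j ≤ μ j ∧ μ j ≤ UCB j) ∧
      A (t + 1) = A t ∪ (S t).filter
        (fun i => kthLargestE (S t) UCB (k - (A t).card + 1) < ((LCB i : ℝ) : EReal)) ∧
      R (t + 1) = R t ∪ (S t).filter
        (fun i => ((UCB i : ℝ) : EReal) < kthLargestE (S t) LCB (k - (A t).card)) ∧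
      S (t + 1) = S t \ (A (t + 1) ∪ R (t + 1)))
    (hfin : S T = ∅) :
    A T = Finset.univ.filter (fun i : Fin n => (i : ℕ) < k) := by
  classical
  set Top : Finset (Fin n) := Finset.univ.filter (fun i : Fin n => (i : ℕ) < k) with hTop
  have hTopmem : ∀ i : Fin n, i ∈ Top ↔ (i : ℕ) < k := by
    intro i; simp [hTop]
  have hTopcard : Top.card = k := by
    have himg : Top = Finset.image (Fin.castLE hkn) Finset.univ := by
      ext i
      simp only [hTop, Finset.mem_filter, Finset.mem_univ, true_and, Finset.mem_image]
      constructor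
      · intro h
        exact ⟨⟨(i : ℕ), h⟩, by apply Fin.ext; rfl⟩
      · rintro ⟨j, rfl⟩
        exact j.isLt
    rw [himg, Finset.card_image_of_injective _ (Fin.castLE_injective hkn),
      Finset.card_univ, Fintype.card_fin]
  have hinv : ∀ t ≤ T, A t ⊆ Top ∧ (∀ i ∈ R t, k ≤ (i : ℕ)) := by
    intro t
    induction t with
    | zero =>
      intro _
      constructor
      · rw [hinitA]; exact Finset.empty_subset _
      · intro i hi; rw [hinitR] at hi; exact absurd hi (Finset.notMem_empty i)
    | succ t ih =>
      intro ht
      have ht' : t ≤ T := by omega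
      obtain ⟨hAt, hRt⟩ := ih ht'
      obtain ⟨LCB, UCB, hbounds, hA1, hR1, hS1⟩ := hstep t (by omega)
      obtain ⟨hAR, hAS, hRS⟩ := hdisj t ht'
      have hut := hunion t ht'
      have hAcard : (A t).card ≤ k := by
        rw [← hTopcard]; exact Finset.card_le_card hAt
      have hTS : Top ∩ S t = Top \ A t := by
        ext j
        simp only [Finset.mem_inter, Finset.mem_sdiff]
        constructor
        · rintro ⟨hjT, hjS⟩
          exact ⟨hjT, fun hjA => Finset.disjoint_left.mp hAS hjA hjS⟩
        · rintro ⟨hjT, hjA⟩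
          refine ⟨hjT, ?_⟩
          have hju : j ∈ A t ∪ R t ∪ S t := by rw [hut]; exact Finset.mem_univ j
          rcases Finset.mem_union.mp hju with h | h
          · rcases Finset.mem_union.mp h with h | h
            · exact absurd h hjA
            · exact absurd (hRt j h) (by rw [hTopmem] at hjT; omega)
          · exact h
      have hTScard : (Top ∩ S t).card = k - (A t).card := by
        rw [hTS, Finset.card_sdiff_of_subset hAt, hTopcard]
      constructor
      · -- accepted arms are top arms
        rw [hA1]
        intro i hi
        rcases Finset.mem_union.mp hi with hi | hi
        · exact hAt hi
        · rw [Finset.mem_filter] at hi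
          obtain ⟨hiS, hacc⟩ := hi
          by_contra hik
          rw [hTopmem] at hik
          push_neg at hik
          set W := (Top ∩ S t) ∪ {i} with hW
          have hiW : i ∈ W := by simp [hW]
          have hWS : W ⊆ S t := by
            intro j hj
            rcases Finset.mem_union.mp hj with hj | hj
            · exact (Finset.mem_inter.mp hj).2
            · rw [Finset.mem_singleton] at hj; subst hj; exact hiS
          have hWcard : W.card = k - (A t).card + 1 := by
            rw [hW, Finset.card_union_of_disjoint, hTScard, Finset.card_singleton]
            rw [Finset.disjoint_singleton_right]
            intro hmem
            have := (Finset.mem_inter.mp hmem).1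
            rw [hTopmem] at this
            omega
          have hub : ∀ j ∈ W, μ i ≤ UCB j := by
            intro j hj
            rcases Finset.mem_union.mp hj with hj | hj
            · obtain ⟨hjT, hjS⟩ := Finset.mem_inter.mp hj
              rw [hTopmem] at hjT
              have hji : j < i := by
                rw [Fin.lt_def]; omega
              have hμ : μ i < μ j := hmono j i hji
              linarith [(hbounds j hjS).2]
            · rw [Finset.mem_singleton] at hj
              rw [hj]
              exact (hbounds i hiS).2
          have hle := le_kthLargestE_s14 (S t) W UCB (μ i) hWS ⟨i, hiW⟩ hub
          rw [hWcard] at hle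
          have h2 : ((LCB i : ℝ) : EReal) ≤ ((μ i : ℝ) : EReal) :=
            EReal.coe_le_coe_iff.mpr (hbounds i hiS).1
          exact absurd ((hle.trans_lt hacc).trans_le h2) (lt_irrefl _)
      · -- rejected arms are bottom arms
        rw [hR1]
        intro i hi
        rcases Finset.mem_union.mp hi with hi | hi
        · exact hRt i hi
        · rw [Finset.mem_filter] at hi
          obtain ⟨hiS, hrej⟩ := hi
          by_contra hik
          push_neg at hik
          have hiT : i ∈ Top ∩ S t :=
            Finset.mem_inter.mpr ⟨(hTopmem i).mpr hik, hiS⟩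
          have hkt1 : 1 ≤ k - (A t).card := by
            have := Finset.card_pos.mpr ⟨i, hiT⟩
            omega
          have hcnt := kthLargestE_lt_count (S t) LCB (k - (A t).card) hkt1 (UCB i) hrej
          have hsub : (S t).filter (fun j => UCB i < LCB j) ⊆ (Top ∩ S t) \ {i} := by
            intro j hj
            rw [Finset.mem_filter] at hj
            obtain ⟨hjS, hj2⟩ := hj
            have hμ : μ i < μ j :=
              (((hbounds i hiS).2.trans_lt hj2).trans_le (hbounds j hjS).1)
            have hji : (j : ℕ) < (i : ℕ) := by
              by_contra hc
              push_neg at hc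
              rcases eq_or_lt_of_le hc with he | hl
              · have : i = j := Fin.ext he
                subst this
                exact absurd hμ (lt_irrefl _)
              · have : i < j := by rw [Fin.lt_def]; omega
                exact absurd hμ (not_lt.mpr (hmono i j this).le)
            rw [Finset.mem_sdiff, Finset.mem_singleton]
            refine ⟨Finset.mem_inter.mpr ⟨(hTopmem j).mpr (by omega), hjS⟩, ?_⟩
            intro he; subst he; omega
          have hcard := Finset.card_le_card hsub
          have hcard2 : ((Top ∩ S t) \ {i}).card = (Top ∩ S t).card - 1 := by
            rw [Finset.card_sdiff_of_subset (Finset.singleton_subset_iff.mpr hiT), Finset.card_singleton]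
          omega
  obtain ⟨hAT, hRT⟩ := hinv T le_rfl
  have hu := hunion T le_rfl
  rw [hfin, Finset.union_empty] at hu
  apply Finset.Subset.antisymm hAT
  intro i hi
  have hiu : i ∈ A T ∪ R T := by rw [hu]; exact Finset.mem_univ i
  rcases Finset.mem_union.mp hiu with h | h
  · exact h
  · exact absurd (hRT i h) (by rw [hTopmem] at hi; omega)
end
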